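/- Let n ≥ 1 and let m ∈ S(ℝⁿ) be a Schwartz function. For t > 0 and f ∈ L²(ℝⁿ) define T_t f(x) := ∫_{ℝⁿ} m(tξ) f̂(ξ) e^{i x·ξ} dξ, where f̂ is the Fourier–Plancherel transform of f. Then there exists a constant C, depending only on n, such that for all f ∈ L²(ℝⁿ) and all x ∈ ℝⁿ, sup_{t > 0} |T_t f(x)| ≤ C (‖m‖_{L¹(ℝⁿ)} + ∑_{|β| = n+1} ‖∂^β m‖_{L¹(ℝⁿ)}) · Mf(x), where the sum is over all multi-indices β of order n+1. -/

import Mathlib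

set_option maxHeartbeats 1000000

open MeasureTheory Metric Finset
open scoped ENNReal NNReal SchwartzMap

/-- The Fourier transform `f̂(ξ) = ∫ f(x) e^{-i x·ξ} dx`. -/
noncomputable def FT {n : ℕ} (f : EuclideanSpace ℝ (Fin n) → ℂ)
    (ξ : EuclideanSpace ℝ (Fin n)) : ℂ :=
  ∫ x, Complex.exp (-(Complex.I * ((inner ℝ x ξ : ℝ) : ℂ))) * f x

/-- The (uncentered) Hardy–Littlewood maximal function, with values in `[0,∞]`. -/
noncomputable def maxFn {n : ℕ} (f : EuclideanSpace ℝ (Fin n) → ℂ)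
    (x : EuclideanSpace ℝ (Fin n)) : ℝ≥0∞ :=
  ⨆ (z : EuclideanSpace ℝ (Fin n)) (r : ℝ) (_ : 0 < r) (_ : x ∈ ball z r),
    ⨍⁻ y in ball z r, (‖f y‖₊ : ℝ≥0∞) ∂volume

/-- The partial derivative in the `i`-th coordinate direction. -/
noncomputable def pderivI {n : ℕ} (i : Fin n) (f : EuclideanSpace ℝ (Fin n) → ℂ) :
    EuclideanSpace ℝ (Fin n) → ℂ :=
  fun x => fderiv ℝ f x (EuclideanSpace.single i 1)

/-- The multi-index partial derivative `∂^β`. -/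
noncomputable def pderivMulti {n : ℕ} (β : Fin n → ℕ)
    (f : EuclideanSpace ℝ (Fin n) → ℂ) : EuclideanSpace ℝ (Fin n) → ℂ :=
  (List.finRange n).foldr (fun i g => (pderivI i)^[β i] g) f

section Aux

open Complex Real
open scoped FourierTransform RealInnerProductSpace

abbrev Eu (n : ℕ) := EuclideanSpace ℝ (Fin n)

variable {n : ℕ}

lemma hasDerivAt_expI (s : ℝ) :
    HasDerivAt (fun s : ℝ => Complex.exp (Complex.I * s)) (Complex.I * Complex.exp (Complex.I * s)) s := by
  have h : HasDerivAt (fun s : ℝ => (Complex.I * s : ℂ)) Complex.I s := by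
    simpa using (Complex.ofRealCLM.hasDerivAt (x := s)).const_mul Complex.I
  simpa [mul_comm] using h.cexp

lemma iteratedDeriv_expI (k : ℕ) (s : ℝ) :
    iteratedDeriv k (fun s : ℝ => Complex.exp (Complex.I * s)) s
      = Complex.I ^ k * Complex.exp (Complex.I * s) := by
  induction k generalizing s with
  | zero => simp
  | succ k ih =>
    rw [iteratedDeriv_succ]
    have : iteratedDeriv k (fun s : ℝ => Complex.exp (Complex.I * s))
        = fun s : ℝ => Complex.I ^ k * Complex.exp (Complex.I * s) := funext ih
    rw [this]
    have := ((hasDerivAt_expI s).const_mul (Complex.I ^ k)).deriv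
    rw [this]; ring

lemma hasTemperateGrowth_expI :
    Function.HasTemperateGrowth (fun s : ℝ => Complex.exp (Complex.I * s)) := by
  constructor
  · exact (contDiff_const.mul Complex.ofRealCLM.contDiff).cexp
  · intro k
    refine ⟨0, 1, fun s => ?_⟩
    rw [norm_iteratedFDeriv_eq_norm_iteratedDeriv, iteratedDeriv_expI]
    simp [Complex.norm_exp]

lemma HasTemperateGrowth.comp_clm {F G : Type*} [NormedAddCommGroup F] [NormedSpace ℝ F]
    [NormedAddCommGroup G] [NormedSpace ℝ G]
    {u : F → ℂ} (hu : Function.HasTemperateGrowth u) (L : G →L[ℝ] F) :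
    Function.HasTemperateGrowth (fun x => u (L x)) := by
  constructor
  · exact hu.1.comp L.contDiff
  · intro k
    obtain ⟨l, C, hC⟩ := hu.2 k
    refine ⟨l, (C * ‖L‖ ^ k) * (1 + ‖L‖) ^ l, fun x => ?_⟩
    have h1 : iteratedFDeriv ℝ k (u ∘ L) x
        = (iteratedFDeriv ℝ k u (L x)).compContinuousLinearMap fun _ => L :=
      L.iteratedFDeriv_comp_right hu.1 x (by exact_mod_cast le_top)
    have h2 : ‖iteratedFDeriv ℝ k (fun x => u (L x)) x‖
        ≤ ‖iteratedFDeriv ℝ k u (L x)‖ * ‖L‖ ^ k := by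
      show ‖iteratedFDeriv ℝ k (u ∘ L) x‖ ≤ _
      rw [h1]
      simpa using (iteratedFDeriv ℝ k u (L x)).norm_compContinuousLinearMap_le fun _ => L
    have h3 : ‖iteratedFDeriv ℝ k u (L x)‖ ≤ C * (1 + ‖L x‖) ^ l := hC (L x)
    have h4 : (1 + ‖L x‖) ^ l ≤ ((1 + ‖L‖) * (1 + ‖x‖)) ^ l := by
      have hb : (1:ℝ) + ‖L x‖ ≤ (1 + ‖L‖) * (1 + ‖x‖) := by
        have := L.le_opNorm x
        nlinarith [norm_nonneg (L x), norm_nonneg x, norm_nonneg L]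
      exact pow_le_pow_left₀ (by positivity) hb l
    have hC0 : 0 ≤ C := by
      have := hC 0
      simp only [norm_zero, add_zero, one_pow, mul_one] at this
      exact le_trans (norm_nonneg _) this
    calc ‖iteratedFDeriv ℝ k (fun x => u (L x)) x‖
        ≤ (C * (1 + ‖L x‖) ^ l) * ‖L‖ ^ k := by
          refine h2.trans ?_
          gcongr
        _ ≤ (C * ((1 + ‖L‖) * (1 + ‖x‖)) ^ l) * ‖L‖ ^ k := by gcongr
        _ = (C * ‖L‖ ^ k) * (1 + ‖L‖) ^ l * (1 + ‖x‖) ^ l := by rw [mul_pow]; ring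

lemma hasTemperateGrowth_char (x : Eu n) :
    Function.HasTemperateGrowth
      (fun ξ : Eu n => Complex.exp (Complex.I * ((inner ℝ x ξ : ℝ) : ℂ))) := by
  have := HasTemperateGrowth.comp_clm hasTemperateGrowth_expI (innerSL ℝ x)
  simpa using this

lemma hasTemperateGrowth_smul (t : ℝ) :
    Function.HasTemperateGrowth (fun ξ : Eu n => t • ξ) := by
  have : (fun ξ : Eu n => t • ξ) = ⇑(t • ContinuousLinearMap.id ℝ (Eu n)) := by
    funext ξ; simp
  rw [this]
  exact (t • ContinuousLinearMap.id ℝ (Eu n)).hasTemperateGrowth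

/-- `ξ ↦ m (t • ξ)` as a Schwartz map, for `t ≠ 0`. -/
noncomputable def scaleS (t : ℝ) (ht : t ≠ 0) (m : 𝓢(Eu n, ℂ)) : 𝓢(Eu n, ℂ) :=
  SchwartzMap.compCLM ℝ (hasTemperateGrowth_smul t)
    ⟨1, |t|⁻¹, fun ξ => by
      have h : ‖t • ξ‖ = |t| * ‖ξ‖ := by rw [norm_smul]; rfl
      have ht' : 0 < |t| := abs_pos.mpr ht
      rw [pow_one, h]
      have h2 : |t|⁻¹ * |t| = 1 := inv_mul_cancel₀ (ne_of_gt ht')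
      nlinarith [norm_nonneg ξ, inv_pos.mpr ht']⟩ m

lemma scaleS_apply (t : ℝ) (ht : t ≠ 0) (m : 𝓢(Eu n, ℂ)) (ξ : Eu n) :
    scaleS t ht m ξ = m (t • ξ) := rfl

/-- `ξ ↦ m (t • ξ) * e^{i⟨x,ξ⟩}` as a Schwartz map. -/
noncomputable def gS (m : 𝓢(Eu n, ℂ)) (t : ℝ) (ht : t ≠ 0) (x : Eu n) : 𝓢(Eu n, ℂ) :=
  SchwartzMap.bilinLeftCLM (ContinuousLinearMap.mul ℝ ℂ) (hasTemperateGrowth_char x)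
    (scaleS t ht m)

lemma gS_apply (m : 𝓢(Eu n, ℂ)) (t : ℝ) (ht : t ≠ 0) (x : Eu n) (ξ : Eu n) :
    gS m t ht x ξ = m (t • ξ) * Complex.exp (Complex.I * ((inner ℝ x ξ : ℝ) : ℂ)) := rfl

lemma FT_eq_fourierIntegral (f : Eu n → ℂ) (ξ : Eu n) :
    FT f ξ = 𝓕 f ((2 * π)⁻¹ • ξ) := by
  rw [Real.fourier_eq']
  unfold FT
  congr 1
  funext v
  rw [smul_eq_mul]
  congr 1
  rw [real_inner_smul_right]
  congr 1
  have hπ : (π:ℂ) ≠ 0 := by exact_mod_cast Real.pi_ne_zero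
  push_cast
  field_simp

lemma FT_norm_le (f : Eu n → ℂ) (ξ : Eu n) :
    ‖FT f ξ‖ ≤ ∫ y, ‖f y‖ := by
  refine (norm_integral_le_integral_norm _).trans ?_
  refine le_of_eq (integral_congr_ae (Filter.Eventually.of_forall fun y => ?_))
  simp [Complex.norm_exp]

lemma pderivI_schwartz (j : Fin n) (h : 𝓢(Eu n, ℂ)) :
    pderivI j ⇑h = ⇑(LineDeriv.lineDerivOp (EuclideanSpace.single j (1:ℝ)) h) := rfl

lemma FT_pderivI (j : Fin n) (h : 𝓢(Eu n, ℂ)) (ξ : Eu n) :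
    FT (pderivI j ⇑h) ξ = (Complex.I * (ξ j)) * FT (⇑h) ξ := by
  have hint : Integrable (fderiv ℝ ⇑h) volume := by
    have : (fderiv ℝ ⇑h) = ⇑(SchwartzMap.fderivCLM ℝ (Eu n) ℂ h) := rfl
    rw [this]; exact (SchwartzMap.fderivCLM ℝ (Eu n) ℂ h).integrable
  have e1 : FT (pderivI j ⇑h) ξ = 𝓕 (fun v => fderiv ℝ (⇑h) v (EuclideanSpace.single j 1))
      ((2 * π)⁻¹ • ξ) := FT_eq_fourierIntegral _ _
  rw [e1, ← Real.fourier_continuousLinearMap_apply hint,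
    Real.fourier_fderiv h.integrable h.differentiable hint]
  rw [VectorFourier.fourierSMulRight_apply]
  have hinner : ((-innerSL ℝ) ((2 * π)⁻¹ • ξ)) (EuclideanSpace.single j 1)
      = -((2 * π)⁻¹ * ξ j) := by
    simp only [ContinuousLinearMap.neg_apply, innerSL_apply_apply]
    rw [real_inner_smul_left]
    have h2 : ⟪ξ, EuclideanSpace.single j (1:ℝ)⟫ = ξ j := by
      rw [EuclideanSpace.inner_single_right]; simp
    rw [h2]
  rw [hinner, ← FT_eq_fourierIntegral (⇑h) ξ]
  rw [Complex.real_smul, smul_eq_mul]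
  have hπ : (π:ℂ) ≠ 0 := by exact_mod_cast Real.pi_ne_zero
  push_cast
  field_simp

/-- iterate of pderivI on a Schwartz function is the coe of a Schwartz function. -/
lemma pderivI_iter_schwartz (j : Fin n) (k : ℕ) (h : 𝓢(Eu n, ℂ)) :
    (pderivI j)^[k] ⇑h
      = ⇑((fun g => LineDeriv.lineDerivOp (EuclideanSpace.single j (1:ℝ)) g)^[k] h) := by
  induction k generalizing h with
  | zero => rfl
  | succ k ih =>
    rw [Function.iterate_succ_apply, Function.iterate_succ_apply, pderivI_schwartz, ih]

lemma FT_pderivI_iter (j : Fin n) (k : ℕ) (h : 𝓢(Eu n, ℂ)) (ξ : Eu n) :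
    FT ((pderivI j)^[k] ⇑h) ξ = (Complex.I * (ξ j))^k * FT (⇑h) ξ := by
  induction k generalizing h with
  | zero => simp
  | succ k ih =>
    rw [Function.iterate_succ_apply, pderivI_schwartz, ih, ← pderivI_schwartz, FT_pderivI]
    ring

lemma foldr_pderiv_aux (β : Fin n → ℕ) (j : Fin n) (hβ : ∀ i, i ≠ j → β i = 0)
    (f : Eu n → ℂ) : ∀ (l : List (Fin n)), l.Nodup →
    l.foldr (fun i g => (pderivI i)^[β i] g) f = if j ∈ l then (pderivI j)^[β j] f else f := by
  intro l hl
  induction l with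
  | nil => simp
  | cons a l ih =>
    have hnd : l.Nodup := (List.nodup_cons.mp hl).2
    rw [List.foldr_cons, ih hnd]
    by_cases haj : a = j
    · subst haj
      have : a ∉ l := (List.nodup_cons.mp hl).1
      simp [this]
    · rw [hβ a haj]
      simp only [Function.iterate_zero, id_eq]
      have hja : j ≠ a := fun h => haj h.symm
      simp [List.mem_cons, hja]

lemma pderivMulti_single (j : Fin n) (k : ℕ) (f : Eu n → ℂ) :
    pderivMulti (fun i => if i = j then k else 0) f = (pderivI j)^[k] f := by
  unfold pderivMulti
  rw [foldr_pderiv_aux _ j (fun i hij => by simp [hij]) f _ (List.nodup_finRange n)]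
  simp [List.mem_finRange]

/-- The total L¹ expression appearing in the statement. -/
noncomputable def Am (n : ℕ) (m : 𝓢(Eu n, ℂ)) : ℝ :=
  (∫ y, ‖m y‖) +
    ∑ β ∈ Finset.univ.filter
        (fun β : Fin n → Fin (n + 2) => (∑ i, (β i : ℕ)) = n + 1),
      ∫ y, ‖pderivMulti (fun i => (β i : ℕ)) (⇑m) y‖

lemma Am_nonneg (m : 𝓢(Eu n, ℂ)) : 0 ≤ Am n m := by
  unfold Am
  have h1 : (0:ℝ) ≤ ∫ y, ‖m y‖ := integral_nonneg fun y => norm_nonneg _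
  have h2 : (0:ℝ) ≤ ∑ β ∈ Finset.univ.filter
      (fun β : Fin n → Fin (n + 2) => (∑ i, (β i : ℕ)) = n + 1),
      ∫ y, ‖pderivMulti (fun i => (β i : ℕ)) (⇑m) y‖ :=
    Finset.sum_nonneg fun β _ => integral_nonneg fun y => norm_nonneg _
  linarith

lemma key_j (m : 𝓢(Eu n, ℂ)) (j : Fin n) (ξ : Eu n) :
    |ξ j| ^ (n+1) * ‖FT (⇑m) ξ‖
      ≤ ∫ y, ‖pderivMulti (fun i => if i = j then n+1 else 0) (⇑m) y‖ := by
  rw [pderivMulti_single]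
  have h1 : |ξ j| ^ (n+1) * ‖FT (⇑m) ξ‖ = ‖FT ((pderivI j)^[n+1] ⇑m) ξ‖ := by
    rw [FT_pderivI_iter j (n+1) m ξ, norm_mul, norm_pow, norm_mul]
    simp [Complex.norm_real]
  rw [h1]
  exact FT_norm_le _ _

lemma sum_pure_le (hn : 1 ≤ n) (m : 𝓢(Eu n, ℂ)) :
    ∑ j : Fin n, ∫ y, ‖pderivMulti (fun i => if i = j then n+1 else 0) (⇑m) y‖
      ≤ ∑ β ∈ Finset.univ.filter
          (fun β : Fin n → Fin (n + 2) => (∑ i, (β i : ℕ)) = n + 1),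
        ∫ y, ‖pderivMulti (fun i => (β i : ℕ)) (⇑m) y‖ := by
  set e : Fin n → (Fin n → Fin (n+2)) :=
    fun j i => if i = j then (⟨n+1, by omega⟩ : Fin (n+2)) else 0 with he
  have hcoe : ∀ j i, ((e j i : ℕ)) = if i = j then n+1 else 0 := by
    intro j i
    by_cases h : i = j <;> simp [he, h]
  have hinj : Set.InjOn e (Finset.univ : Finset (Fin n)) := by
    intro a _ b _ hab
    by_contra hne
    have h2 : e a a = e b a := congrFun hab a
    have hne' : a ≠ b := hne
    simp only [he, if_pos rfl, if_neg hne'] at h2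
    have := congrArg Fin.val h2
    simp at this
  have himg : Finset.univ.image e ⊆ Finset.univ.filter
      (fun β : Fin n → Fin (n + 2) => (∑ i, (β i : ℕ)) = n + 1) := by
    intro β hβ
    simp only [Finset.mem_image] at hβ
    obtain ⟨j, _, rfl⟩ := hβ
    simp only [Finset.mem_filter, Finset.mem_univ, true_and]
    simp_rw [hcoe]
    simp
  calc ∑ j : Fin n, ∫ y, ‖pderivMulti (fun i => if i = j then n+1 else 0) (⇑m) y‖
      = ∑ β ∈ Finset.univ.image e, ∫ y, ‖pderivMulti (fun i => (β i : ℕ)) (⇑m) y‖ := by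
        rw [Finset.sum_image (fun a ha b hb h => hinj ha hb h)]
        refine Finset.sum_congr rfl fun j _ => ?_
        have hfe : (fun i => ((e j i):ℕ)) = (fun i => if i = j then n+1 else 0) :=
          funext (hcoe j)
        rw [hfe]
    _ ≤ _ := Finset.sum_le_sum_of_subset_of_nonneg himg
        (fun β _ _ => integral_nonneg fun y => norm_nonneg _)

lemma norm_le_sum_abs (ξ : Eu n) : ‖ξ‖ ≤ ∑ j, |ξ j| := by
  rw [EuclideanSpace.norm_eq]
  have hS : (0:ℝ) ≤ ∑ j, |ξ j| := Finset.sum_nonneg fun j _ => abs_nonneg _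
  have h1 : ∑ i, ‖ξ i‖ ^ 2 ≤ (∑ j, |ξ j|) ^ 2 := by
    calc ∑ i, ‖ξ i‖ ^ 2 = ∑ i, |ξ i| * |ξ i| := by
          refine Finset.sum_congr rfl fun i _ => ?_
          rw [Real.norm_eq_abs, sq]
      _ ≤ ∑ i, |ξ i| * ∑ j, |ξ j| := by
          refine Finset.sum_le_sum fun i _ => ?_
          exact mul_le_mul_of_nonneg_left
            (Finset.single_le_sum (fun j _ => abs_nonneg (ξ j)) (Finset.mem_univ i))
            (abs_nonneg _)
      _ = (∑ j, |ξ j|) ^ 2 := by rw [← Finset.sum_mul, sq]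
  calc Real.sqrt (∑ i, ‖ξ i‖ ^ 2) ≤ Real.sqrt ((∑ j, |ξ j|) ^ 2) := Real.sqrt_le_sqrt h1
    _ = ∑ j, |ξ j| := Real.sqrt_sq hS

lemma sum_abs_pow_le (hn : 1 ≤ n) (ξ : Eu n) :
    (∑ j : Fin n, |ξ j|) ^ (n+1) ≤ (n:ℝ)^(n+1) * ∑ j : Fin n, |ξ j| ^ (n+1) := by
  obtain ⟨j0, _, hj0⟩ := Finset.exists_max_image (Finset.univ : Finset (Fin n))
    (fun j => |ξ j|) ⟨⟨0, by omega⟩, Finset.mem_univ _⟩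
  have h1 : ∑ j : Fin n, |ξ j| ≤ (n:ℝ) * |ξ j0| := by
    calc ∑ j : Fin n, |ξ j| ≤ ∑ _j : Fin n, |ξ j0| :=
          Finset.sum_le_sum fun j _ => hj0 j (Finset.mem_univ j)
      _ = (n:ℝ) * |ξ j0| := by simp [mul_comm]
  calc (∑ j : Fin n, |ξ j|) ^ (n+1) ≤ ((n:ℝ) * |ξ j0|) ^ (n+1) :=
        pow_le_pow_left₀ (Finset.sum_nonneg fun j _ => abs_nonneg _) h1 _
    _ = (n:ℝ)^(n+1) * |ξ j0| ^ (n+1) := mul_pow _ _ _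
    _ ≤ (n:ℝ)^(n+1) * ∑ j : Fin n, |ξ j| ^ (n+1) := by
        refine mul_le_mul_of_nonneg_left ?_ (by positivity)
        exact Finset.single_le_sum (f := fun j => |ξ j| ^ (n+1)) (fun j _ => by positivity) (Finset.mem_univ j0)

lemma kernel_decay (hn : 1 ≤ n) (m : 𝓢(Eu n, ℂ)) (ξ : Eu n) :
    ‖FT (⇑m) ξ‖ * (1 + ‖ξ‖)^(n+1) ≤ (2^(n+1) * (1 + (n:ℝ)^(n+1))) * Am n m := by
  set K := ‖FT (⇑m) ξ‖ with hK
  have hK0 : 0 ≤ K := norm_nonneg _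
  set a := ‖ξ‖ with ha
  have ha0 : (0:ℝ) ≤ a := norm_nonneg _
  have step1 : (1 + a)^(n+1) ≤ 2^(n+1) * (1 + a^(n+1)) := by
    rcases le_total a 1 with h | h
    · calc (1+a)^(n+1) ≤ 2^(n+1) := by
            refine pow_le_pow_left₀ (by linarith) (by linarith) _
        _ ≤ 2^(n+1) * (1 + a^(n+1)) := by
            nlinarith [pow_nonneg ha0 (n+1), pow_pos (show (0:ℝ) < 2 by norm_num) (n+1)]
    · calc (1+a)^(n+1) ≤ (2*a)^(n+1) := pow_le_pow_left₀ (by linarith) (by linarith) _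
        _ = 2^(n+1) * a^(n+1) := mul_pow _ _ _
        _ ≤ 2^(n+1) * (1 + a^(n+1)) := by
            nlinarith [pow_pos (show (0:ℝ) < 2 by norm_num) (n+1), pow_nonneg ha0 (n+1)]
  have hKI : K ≤ Am n m := by
    refine (FT_norm_le (⇑m) ξ).trans ?_
    unfold Am
    have : (0:ℝ) ≤ ∑ β ∈ Finset.univ.filter
        (fun β : Fin n → Fin (n + 2) => (∑ i, (β i : ℕ)) = n + 1),
        ∫ y, ‖pderivMulti (fun i => (β i : ℕ)) (⇑m) y‖ :=
      Finset.sum_nonneg fun β _ => integral_nonneg fun y => norm_nonneg _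
    linarith
  have step3 : a^(n+1) * K ≤ (n:ℝ)^(n+1) * Am n m := by
    calc a^(n+1) * K ≤ (∑ j : Fin n, |ξ j|)^(n+1) * K := by
          refine mul_le_mul_of_nonneg_right (pow_le_pow_left₀ ha0 (norm_le_sum_abs ξ) _) hK0
      _ ≤ ((n:ℝ)^(n+1) * ∑ j : Fin n, |ξ j| ^ (n+1)) * K := by
          exact mul_le_mul_of_nonneg_right (sum_abs_pow_le hn ξ) hK0
      _ = (n:ℝ)^(n+1) * ∑ j : Fin n, |ξ j| ^ (n+1) * K := by
          rw [mul_assoc, Finset.sum_mul]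
      _ ≤ (n:ℝ)^(n+1) * ∑ j : Fin n,
            ∫ y, ‖pderivMulti (fun i => if i = j then n+1 else 0) (⇑m) y‖ := by
          refine mul_le_mul_of_nonneg_left (Finset.sum_le_sum fun j _ => key_j m j ξ)
            (by positivity)
      _ ≤ (n:ℝ)^(n+1) * Am n m := by
          refine mul_le_mul_of_nonneg_left ?_ (by positivity)
          unfold Am
          have h1 : (0:ℝ) ≤ ∫ y, ‖m y‖ := integral_nonneg fun y => norm_nonneg _
          have := sum_pure_le hn m
          linarith
  calc K * (1+a)^(n+1) ≤ K * (2^(n+1) * (1 + a^(n+1))) :=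
        mul_le_mul_of_nonneg_left step1 hK0
    _ = 2^(n+1) * (K + a^(n+1) * K) := by ring
    _ ≤ 2^(n+1) * (Am n m + (n:ℝ)^(n+1) * Am n m) := by
        refine mul_le_mul_of_nonneg_left (by linarith) (by positivity)
    _ = (2^(n+1) * (1 + (n:ℝ)^(n+1))) * Am n m := by ring

lemma ball_lintegral_le (hn : 1 ≤ n) (f : Eu n → ℂ) (x : Eu n) {R : ℝ} (hR : 0 < R) :
    ∫⁻ y in ball x R, (‖f y‖₊ : ℝ≥0∞) ∂volume
      ≤ (ENNReal.ofReal (R ^ n) * volume (ball (0 : Eu n) 1)) * maxFn f x := by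
  haveI : Nonempty (Fin n) := ⟨⟨0, by omega⟩⟩
  have hvol : volume (ball x R) = ENNReal.ofReal (R ^ n) * volume (ball (0 : Eu n) 1) := by
    rw [Measure.addHaar_ball volume x hR.le, finrank_euclideanSpace_fin]
  have h0 : volume (ball x R) ≠ 0 := (measure_ball_pos volume x hR).ne'
  have htop : volume (ball x R) ≠ ⊤ := measure_ball_lt_top.ne
  have havg : ∫⁻ y in ball x R, (‖f y‖₊ : ℝ≥0∞) ∂volume
      = (⨍⁻ y in ball x R, (‖f y‖₊ : ℝ≥0∞) ∂volume) * volume (ball x R) := by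
    rw [setLAverage_eq, ENNReal.div_mul_cancel h0 htop]
  have hle : (⨍⁻ y in ball x R, (‖f y‖₊ : ℝ≥0∞) ∂volume) ≤ maxFn f x := by
    exact le_iSup_of_le x (le_iSup_of_le R (le_iSup_of_le hR
      (le_iSup_of_le (mem_ball_self hR) le_rfl)))
  rw [havg, hvol]
  rw [mul_comm]
  exact mul_le_mul_right hle _

lemma maximal_bound (hn : 1 ≤ n) (f : Eu n → ℂ) {t : ℝ} (ht : 0 < t) (x : Eu n) :
    ∫⁻ y, (‖f y‖₊ : ℝ≥0∞) * ENNReal.ofReal ((t^n)⁻¹ * ((1 + t⁻¹ * ‖y - x‖)^(n+1))⁻¹)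
      ≤ (2^(n+2) * volume (ball (0 : Eu n) 1)) * maxFn f x := by
  set A : ℕ → Set (Eu n) := fun k =>
    Nat.casesOn k (ball x t) (fun k' => ball x (2^(k'+1) * t) \ ball x (2^k' * t)) with hA
  have hsub : ∀ k, A k ⊆ ball x (2^k * t) := by
    intro k
    cases k with
    | zero => simp [hA, one_mul]
    | succ k' => exact Set.diff_subset
  have hcover : (Set.univ : Set (Eu n)) ⊆ ⋃ k, A k := by
    intro y _
    have hex : ∃ k : ℕ, y ∈ ball x (2^k * t) := by
      obtain ⟨k, hk⟩ := pow_unbounded_of_one_lt (dist y x / t) (one_lt_two (α := ℝ))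
      exact ⟨k, by rw [mem_ball]; rw [div_lt_iff₀ ht] at hk; linarith [hk]⟩
    classical
    let k0 := Nat.find hex
    rcases Nat.eq_zero_or_pos k0 with h0 | hpos
    · refine Set.mem_iUnion.2 ⟨0, ?_⟩
      have := Nat.find_spec hex
      rw [show Nat.find hex = k0 from rfl, h0] at this
      simpa [hA] using this
    · obtain ⟨k', hk'⟩ := Nat.exists_eq_succ_of_ne_zero hpos.ne'
      refine Set.mem_iUnion.2 ⟨k' + 1, ?_⟩
      have h1 : y ∈ ball x (2^(k'+1) * t) := by
        have := Nat.find_spec hex; rwa [show Nat.find hex = k0 from rfl, hk'] at this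
      have h2 : y ∉ ball x (2^k' * t) := by
        have := Nat.find_min hex (show k' < k0 by omega)
        exact this
      exact ⟨h1, h2⟩
  have hker : ∀ k, ∀ y ∈ A k,
      ENNReal.ofReal ((t^n)⁻¹ * ((1 + t⁻¹ * ‖y - x‖)^(n+1))⁻¹)
        ≤ ENNReal.ofReal ((t^n)⁻¹ * (2^(n+1) * (((2:ℝ)^k)^(n+1))⁻¹)) := by
    intro k y hy
    refine ENNReal.ofReal_le_ofReal ?_
    have hu0 : (0:ℝ) ≤ t⁻¹ * ‖y - x‖ := by positivity
    have hpow : ((2:ℝ)^k)^(n+1) ≤ 2^(n+1) * (1 + t⁻¹ * ‖y - x‖)^(n+1) := by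
      have hbase : (2:ℝ)^k ≤ 2 * (1 + t⁻¹ * ‖y - x‖) := by
        cases k with
        | zero => norm_num; linarith
        | succ k' =>
          have h2 : y ∉ ball x (2^k' * t) := hy.2
          have hd : 2^k' * t ≤ dist y x := le_of_not_gt (by simpa [mem_ball] using h2)
          have hdn : dist y x = ‖y - x‖ := dist_eq_norm y x
          have : (2:ℝ)^k' ≤ t⁻¹ * ‖y - x‖ := by
            rw [← hdn]
            rw [mul_comm] at hd
            calc (2:ℝ)^k' = t⁻¹ * (t * 2^k') := by field_simp
              _ ≤ t⁻¹ * dist y x := by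
                  refine mul_le_mul_of_nonneg_left hd (by positivity)
          calc (2:ℝ)^(k'+1) = 2 * 2^k' := by ring
            _ ≤ 2 * (1 + t⁻¹ * ‖y - x‖) := by nlinarith
      calc ((2:ℝ)^k)^(n+1) ≤ (2 * (1 + t⁻¹ * ‖y - x‖))^(n+1) :=
            pow_le_pow_left₀ (by positivity) hbase _
        _ = 2^(n+1) * (1 + t⁻¹ * ‖y - x‖)^(n+1) := mul_pow _ _ _
    have hinv : ((1 + t⁻¹ * ‖y - x‖)^(n+1))⁻¹ ≤ 2^(n+1) * (((2:ℝ)^k)^(n+1))⁻¹ := by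
      rw [← one_div, ← div_eq_mul_inv]
      rw [div_le_div_iff₀ (by positivity) (by positivity)]
      linarith [hpow]
    exact mul_le_mul_of_nonneg_left hinv (by positivity)
  -- measurable sets
  have hAmeas : ∀ k, MeasurableSet (A k) := by
    intro k
    cases k with
    | zero => exact measurableSet_ball
    | succ k' => exact measurableSet_ball.diff measurableSet_ball
  -- main chain
  have step1 : ∫⁻ y, (‖f y‖₊ : ℝ≥0∞) * ENNReal.ofReal ((t^n)⁻¹ * ((1 + t⁻¹ * ‖y - x‖)^(n+1))⁻¹)
      ≤ ∑' k, ∫⁻ y in A k, (‖f y‖₊ : ℝ≥0∞) * ENNReal.ofReal ((t^n)⁻¹ * ((1 + t⁻¹ * ‖y - x‖)^(n+1))⁻¹) := by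
    rw [← setLIntegral_univ]
    exact (lintegral_mono_set hcover).trans (lintegral_iUnion_le _ _)
  have step2 : ∀ k, ∫⁻ y in A k, (‖f y‖₊ : ℝ≥0∞) * ENNReal.ofReal ((t^n)⁻¹ * ((1 + t⁻¹ * ‖y - x‖)^(n+1))⁻¹)
      ≤ ENNReal.ofReal ((t^n)⁻¹ * (2^(n+1) * (((2:ℝ)^k)^(n+1))⁻¹)) * ∫⁻ y in ball x (2^k * t), (‖f y‖₊ : ℝ≥0∞) := by
    intro k
    calc ∫⁻ y in A k, (‖f y‖₊ : ℝ≥0∞) * ENNReal.ofReal ((t^n)⁻¹ * ((1 + t⁻¹ * ‖y - x‖)^(n+1))⁻¹)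
        ≤ ∫⁻ y in A k, ENNReal.ofReal ((t^n)⁻¹ * (2^(n+1) * (((2:ℝ)^k)^(n+1))⁻¹)) * (‖f y‖₊ : ℝ≥0∞) := by
          refine lintegral_mono_ae ((ae_restrict_iff' (hAmeas k)).2
            (Filter.Eventually.of_forall fun y hy => ?_))
          rw [mul_comm]
          exact mul_le_mul_left (hker k y hy) _
      _ = ENNReal.ofReal ((t^n)⁻¹ * (2^(n+1) * (((2:ℝ)^k)^(n+1))⁻¹)) * ∫⁻ y in A k, (‖f y‖₊ : ℝ≥0∞) :=
          lintegral_const_mul' _ _ ENNReal.ofReal_ne_top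
      _ ≤ _ := mul_le_mul_right (lintegral_mono_set (hsub k)) _
  have step3 : ∀ k, ENNReal.ofReal ((t^n)⁻¹ * (2^(n+1) * (((2:ℝ)^k)^(n+1))⁻¹))
        * ∫⁻ y in ball x (2^k * t), (‖f y‖₊ : ℝ≥0∞)
      ≤ ENNReal.ofReal ((2:ℝ)⁻¹^k) * (ENNReal.ofReal (2^(n+1)) * volume (ball (0 : Eu n) 1) * maxFn f x) := by
    intro k
    have hRpos : (0:ℝ) < 2^k * t := by positivity
    refine (mul_le_mul_right (ball_lintegral_le hn f x hRpos) _).trans ?_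
    rw [← mul_assoc, ← mul_assoc]
    have hrhs : ENNReal.ofReal ((2:ℝ)⁻¹^k) * (ENNReal.ofReal (2^(n+1)) * volume (ball (0:Eu n) 1) * maxFn f x)
        = (ENNReal.ofReal ((2:ℝ)⁻¹^k) * ENNReal.ofReal (2^(n+1)) * volume (ball (0:Eu n) 1)) * maxFn f x := by
      ring
    rw [hrhs]
    refine mul_le_mul_left ?_ (maxFn f x)
    refine mul_le_mul_left (le_of_eq ?_) (volume (ball (0:Eu n) 1))
    rw [← ENNReal.ofReal_mul (by positivity), ← ENNReal.ofReal_mul (by positivity)]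
    congr 1
    have h2k : ((2:ℝ)^k) ≠ 0 := by positivity
    have htn : (t:ℝ) ≠ 0 := ht.ne'
    field_simp
    have h12 : ((1:ℝ)/2)^k * 2^k = 1 := by rw [← mul_pow]; norm_num
    linear_combination (-(t^n * 2^(k*n))) * h12
  have hgeo : ∑' (k:ℕ), ENNReal.ofReal ((2:ℝ)⁻¹^k) = 2 := by
    have h1 : ∀ k : ℕ, ENNReal.ofReal ((2:ℝ)⁻¹^k) = (2⁻¹ : ℝ≥0∞)^k := by
      intro k
      rw [ENNReal.ofReal_pow (by norm_num)]
      congr 1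
      rw [ENNReal.ofReal_inv_of_pos (by norm_num)]
      norm_num
    simp_rw [h1]
    rw [ENNReal.tsum_geometric, ENNReal.one_sub_inv_two, inv_inv]
  have hofr : ENNReal.ofReal ((2:ℝ)^(n+1)) = 2^(n+1) := by
    rw [ENNReal.ofReal_pow (by norm_num)]
    norm_num
  calc ∫⁻ y, (‖f y‖₊ : ℝ≥0∞) * ENNReal.ofReal ((t^n)⁻¹ * ((1 + t⁻¹ * ‖y - x‖)^(n+1))⁻¹)
      ≤ ∑' k, ∫⁻ y in A k, (‖f y‖₊ : ℝ≥0∞)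
          * ENNReal.ofReal ((t^n)⁻¹ * ((1 + t⁻¹ * ‖y - x‖)^(n+1))⁻¹) := step1
    _ ≤ ∑' (k:ℕ), ENNReal.ofReal ((2:ℝ)⁻¹^k)
          * (ENNReal.ofReal (2^(n+1)) * volume (ball (0 : Eu n) 1) * maxFn f x) :=
        ENNReal.tsum_le_tsum fun k => (step2 k).trans (step3 k)
    _ = (∑' (k:ℕ), ENNReal.ofReal ((2:ℝ)⁻¹^k))
          * (ENNReal.ofReal (2^(n+1)) * volume (ball (0 : Eu n) 1) * maxFn f x) :=
        ENNReal.tsum_mul_right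
    _ = 2 * (2^(n+1) * volume (ball (0 : Eu n) 1) * maxFn f x) := by rw [hgeo, hofr]
    _ = (2^(n+2) * volume (ball (0 : Eu n) 1)) * maxFn f x := by ring

/-- Fourier transform of `ξ ↦ m(tξ)e^{i⟨x,ξ⟩}` in terms of `FT m`. -/
lemma FT_modulate_dilate (m : 𝓢(Eu n, ℂ)) {t : ℝ} (ht : 0 < t) (x y : Eu n) :
    FT (fun ξ => m (t • ξ) * Complex.exp (Complex.I * ((inner ℝ x ξ : ℝ) : ℂ))) y
      = (((t^n : ℝ))⁻¹ : ℝ) • FT (⇑m) (t⁻¹ • (y - x)) := by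
  unfold FT
  have hpt : ∀ ξ : Eu n,
      Complex.exp (-(Complex.I * ((inner ℝ ξ y : ℝ) : ℂ)))
        * (m (t • ξ) * Complex.exp (Complex.I * ((inner ℝ x ξ : ℝ) : ℂ)))
      = Complex.exp (-(Complex.I * ((inner ℝ ξ (y - x) : ℝ) : ℂ))) * m (t • ξ) := by
    intro ξ
    rw [mul_comm (m (t • ξ)) _, ← mul_assoc, ← Complex.exp_add]
    congr 2
    have h1 : ⟪ξ, y - x⟫ = ⟪ξ, y⟫ - ⟪ξ, x⟫ := inner_sub_right ξ y x
    have h2 : ⟪x, ξ⟫ = ⟪ξ, x⟫ := real_inner_comm ξ x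
    rw [h1, h2]
    push_cast
    ring
  rw [integral_congr_ae (Filter.Eventually.of_forall hpt)]
  have hsub : ∀ ξ : Eu n,
      Complex.exp (-(Complex.I * ((inner ℝ ξ (y - x) : ℝ) : ℂ))) * m (t • ξ)
      = (fun u => Complex.exp (-(Complex.I * ((inner ℝ u (t⁻¹ • (y - x)) : ℝ) : ℂ))) * m u) (t • ξ) := by
    intro ξ
    simp only
    congr 3
    rw [real_inner_smul_left, real_inner_smul_right, ← mul_assoc, mul_inv_cancel₀ ht.ne', one_mul]
  rw [integral_congr_ae (Filter.Eventually.of_forall hsub)]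
  rw [MeasureTheory.Measure.integral_comp_smul_of_nonneg volume
    (fun u => Complex.exp (-(Complex.I * ((inner ℝ u (t⁻¹ • (y - x)) : ℝ) : ℂ))) * m u) t
    (hR := ht.le)]
  rw [finrank_euclideanSpace_fin]

end Aux

/-- Let `m` be a Schwartz function on `ℝⁿ`, `n ≥ 1`.  For `t > 0` and `f ∈ L²` let
`T_t f(x) := ∫ m(tξ) f̂(ξ) e^{i x·ξ} dξ`, where `f̂` is the Fourier–Plancherel transform
of `f` (characterized among `L²` functions by the multiplication formula
`∫ f̂ g = ∫ f ĝ` for all Schwartz `g`).  Then there is a constant `C`, depending only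
on `n`, such that `sup_{t>0} |T_t f(x)| ≤ C (‖m‖_{L¹} + ∑_{|β|=n+1} ‖∂^β m‖_{L¹}) Mf(x)`. -/
theorem stmt5 (n : ℕ) (hn : 1 ≤ n) :
    ∃ C : ℝ≥0∞, C ≠ ⊤ ∧
      ∀ m : 𝓢(EuclideanSpace ℝ (Fin n), ℂ),
      ∀ f F : EuclideanSpace ℝ (Fin n) → ℂ,
        MemLp f 2 volume → MemLp F 2 volume →
        (∀ g : 𝓢(EuclideanSpace ℝ (Fin n), ℂ), ∫ ξ, F ξ * g ξ = ∫ x, f x * FT (⇑g) x) →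
        ∀ x : EuclideanSpace ℝ (Fin n), ∀ t : ℝ, 0 < t →
          (‖∫ ξ, m (t • ξ) * F ξ * Complex.exp (Complex.I * ((inner ℝ x ξ : ℝ) : ℂ))‖₊ : ℝ≥0∞) ≤
            C * ENNReal.ofReal
                ((∫ y, ‖m y‖) +
                  ∑ β ∈ Finset.univ.filter
                      (fun β : Fin n → Fin (n + 2) => (∑ i, (β i : ℕ)) = n + 1),
                    ∫ y, ‖pderivMulti (fun i => (β i : ℕ)) (⇑m) y‖) *
              maxFn f x := by
  classical
  refine ⟨ENNReal.ofReal (2^(n+1) * (1 + (n:ℝ)^(n+1))) *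
      (2^(n+2) * volume (ball (0 : Eu n) 1)), ?_, ?_⟩
  · exact ENNReal.mul_ne_top ENNReal.ofReal_ne_top
      (ENNReal.mul_ne_top (by simp) measure_ball_lt_top.ne)
  intro m f F hf hF hmul x t ht
  set D : ℝ := 2^(n+1) * (1 + (n:ℝ)^(n+1)) with hD
  have hD0 : 0 ≤ D := by positivity
  set g : 𝓢(Eu n, ℂ) := gS m t ht.ne' x with hg
  have hint1 : (∫ ξ, m (t • ξ) * F ξ * Complex.exp (Complex.I * ((inner ℝ x ξ : ℝ) : ℂ)))
      = ∫ ξ, F ξ * g ξ := by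
    refine integral_congr_ae (Filter.Eventually.of_forall fun ξ => ?_)
    show m (t • ξ) * F ξ * Complex.exp (Complex.I * ((inner ℝ x ξ : ℝ) : ℂ)) = F ξ * g ξ
    rw [hg, gS_apply]; ring
  rw [hint1, hmul g]
  have hcoe : ⇑g = fun ξ => m (t • ξ) * Complex.exp (Complex.I * ((inner ℝ x ξ : ℝ) : ℂ)) :=
    funext fun ξ => gS_apply m t ht.ne' x ξ
  have hDAm0 : 0 ≤ D * Am n m := mul_nonneg hD0 (Am_nonneg m)
  have hFTg : ∀ y, ‖FT (⇑g) y‖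
      ≤ (D * Am n m) * ((t^n)⁻¹ * ((1 + t⁻¹ * ‖y - x‖)^(n+1))⁻¹) := by
    intro y
    rw [hcoe, FT_modulate_dilate m ht x y, norm_smul]
    have habs : ‖((t^n : ℝ))⁻¹‖ = (t^n)⁻¹ := by
      rw [Real.norm_eq_abs, abs_of_nonneg (by positivity)]
    rw [habs]
    set w := t⁻¹ • (y - x) with hw
    have hwn : ‖w‖ = t⁻¹ * ‖y - x‖ := by
      rw [hw, norm_smul, Real.norm_eq_abs, abs_of_nonneg (by positivity)]
    have hkd := kernel_decay hn m w
    have hpow : (0:ℝ) < (1 + ‖w‖)^(n+1) := by positivity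
    have h2 : ‖FT (⇑m) w‖ ≤ (D * Am n m) * ((1 + ‖w‖)^(n+1))⁻¹ := by
      rw [← le_div_iff₀ hpow] at hkd
      rw [div_eq_mul_inv] at hkd
      exact hkd
    calc (t^n)⁻¹ * ‖FT (⇑m) w‖
        ≤ (t^n)⁻¹ * ((D * Am n m) * ((1 + ‖w‖)^(n+1))⁻¹) :=
          mul_le_mul_of_nonneg_left h2 (by positivity)
      _ = (D * Am n m) * ((t^n)⁻¹ * ((1 + t⁻¹ * ‖y - x‖)^(n+1))⁻¹) := by
          rw [hwn]; ring
  calc (‖∫ y, f y * FT (⇑g) y‖₊ : ℝ≥0∞)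
      ≤ ∫⁻ y, ‖f y * FT (⇑g) y‖₊ := enorm_integral_le_lintegral_enorm _
    _ = ∫⁻ y, (‖f y‖₊ : ℝ≥0∞) * (‖FT (⇑g) y‖₊ : ℝ≥0∞) := by
        refine lintegral_congr fun y => ?_
        rw [nnnorm_mul, ENNReal.coe_mul]
    _ ≤ ∫⁻ y, ENNReal.ofReal (D * Am n m) *
          ((‖f y‖₊ : ℝ≥0∞) * ENNReal.ofReal ((t^n)⁻¹ * ((1 + t⁻¹ * ‖y - x‖)^(n+1))⁻¹)) := by
        refine lintegral_mono fun y => ?_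
        rw [← mul_assoc, mul_comm (ENNReal.ofReal (D * Am n m)) ((‖f y‖₊ : ℝ≥0∞)), mul_assoc]
        refine mul_le_mul_right ?_ _
        rw [show (‖FT (⇑g) y‖₊ : ℝ≥0∞) = ENNReal.ofReal ‖FT (⇑g) y‖ from (ofReal_norm _).symm, ← ENNReal.ofReal_mul hDAm0]
        exact ENNReal.ofReal_le_ofReal (hFTg y)
    _ = ENNReal.ofReal (D * Am n m) *
          ∫⁻ y, (‖f y‖₊ : ℝ≥0∞) * ENNReal.ofReal ((t^n)⁻¹ * ((1 + t⁻¹ * ‖y - x‖)^(n+1))⁻¹) :=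
        lintegral_const_mul' _ _ ENNReal.ofReal_ne_top
    _ ≤ ENNReal.ofReal (D * Am n m) *
          ((2^(n+2) * volume (ball (0 : Eu n) 1)) * maxFn f x) :=
        mul_le_mul_right (maximal_bound hn f ht x) _
    _ = (ENNReal.ofReal D * (2^(n+2) * volume (ball (0 : Eu n) 1)))
          * ENNReal.ofReal (Am n m) * maxFn f x := by
        rw [ENNReal.ofReal_mul hD0]; ring
    _ = _ := rfl
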